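/- The space B(L^1[0,1]) of bounded linear operators on the Banach space L^1[0,1] (real-valued Lebesgue integrable functions on [0,1] with the L^1 norm) does not have the ball-covering property. -/

import Mathlib

open Metric ZeroAtInfty
open scoped ENNReal

/-- A normed space has the ball-covering property (BCP) if there is a countable family of
closed balls, none containing the origin (`0 < r n < ‖c n‖`), covering the unit sphere. -/
def HasBCP (X : Type*) [NormedAddCommGroup X] : Prop :=
  ∃ (c : ℕ → X) (r : ℕ → ℝ),
    (∀ n, 0 < r n ∧ r n < ‖c n‖) ∧
    sphere (0 : X) 1 ⊆ ⋃ n, closedBall (c n) (r n)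

/-- The strong ball-covering property: the radii are uniformly bounded above. -/
def HasSBCP (X : Type*) [NormedAddCommGroup X] : Prop :=
  ∃ (c : ℕ → X) (r : ℕ → ℝ),
    (∀ n, 0 < r n ∧ r n < ‖c n‖) ∧
    (∃ M : ℝ, ∀ n, r n ≤ M) ∧
    sphere (0 : X) 1 ⊆ ⋃ n, closedBall (c n) (r n)

/-- The uniform ball-covering property: strong BCP together with a closed ball around the
origin disjoint from all the balls of the covering. -/
def HasUBCP (X : Type*) [NormedAddCommGroup X] : Prop :=
  ∃ (c : ℕ → X) (r : ℕ → ℝ),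
    (∀ n, 0 < r n ∧ r n < ‖c n‖) ∧
    (∃ M : ℝ, ∀ n, r n ≤ M) ∧
    (∃ ρ : ℝ, 0 < ρ ∧ ∀ n, Disjoint (closedBall (0 : X) ρ) (closedBall (c n) (r n))) ∧
    sphere (0 : X) 1 ⊆ ⋃ n, closedBall (c n) (r n)

/-- A topological space has a countable π-basis if there is a countable family of nonempty
open sets such that every nonempty open set contains a member of the family. -/
def HasCountablePiBasis (K : Type*) [TopologicalSpace K] : Prop :=
  ∃ B : Set (Set K), B.Countable ∧ (∀ U ∈ B, IsOpen U ∧ U.Nonempty) ∧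
    ∀ V : Set K, IsOpen V → V.Nonempty → ∃ U ∈ B, U ⊆ V



open Metric ZeroAtInfty
open scoped ENNReal

namespace BCPfail
open MeasureTheory Set

variable {α : Type*} [MeasurableSpace α] {μ : Measure α}

/-- Multiplication by the indicator of `E`, as a function on `L¹`. -/
noncomputable def mulInd (μ : Measure α) (E : Set α) (hE : MeasurableSet E)
    (f : Lp ℝ 1 μ) : Lp ℝ 1 μ :=
  MemLp.toLp (E.indicator ⇑f) ((Lp.memLp f).indicator hE)

theorem coeFn_mulInd (E : Set α) (hE : MeasurableSet E) (f : Lp ℝ 1 μ) :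
    mulInd μ E hE f =ᵐ[μ] E.indicator ⇑f :=
  MemLp.coeFn_toLp _

theorem norm_mulInd_le (E : Set α) (hE : MeasurableSet E) (f : Lp ℝ 1 μ) :
    ‖mulInd μ E hE f‖ ≤ ‖f‖ := by
  rw [mulInd, Lp.norm_toLp, Lp.norm_def]
  exact ENNReal.toReal_mono (Lp.eLpNorm_ne_top f) (eLpNorm_indicator_le _)

theorem mulInd_add (E : Set α) (hE : MeasurableSet E) (f g : Lp ℝ 1 μ) :
    mulInd μ E hE (f + g) = mulInd μ E hE f + mulInd μ E hE g := by
  apply Lp.ext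
  filter_upwards [coeFn_mulInd E hE (f + g), coeFn_mulInd E hE f, coeFn_mulInd E hE g,
    Lp.coeFn_add f g, Lp.coeFn_add (mulInd μ E hE f) (mulInd μ E hE g)] with x h1 h2 h3 h4 h5
  rw [h1, h5, Pi.add_apply, h2, h3]
  by_cases hx : x ∈ E
  · rw [Set.indicator_of_mem hx, Set.indicator_of_mem hx, Set.indicator_of_mem hx, h4]
    rfl
  · rw [Set.indicator_of_notMem hx, Set.indicator_of_notMem hx, Set.indicator_of_notMem hx]
    norm_num

theorem mulInd_smul (E : Set α) (hE : MeasurableSet E) (c : ℝ) (f : Lp ℝ 1 μ) :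
    mulInd μ E hE (c • f) = c • mulInd μ E hE f := by
  apply Lp.ext
  filter_upwards [coeFn_mulInd E hE (c • f), coeFn_mulInd E hE f,
    Lp.coeFn_smul c f, Lp.coeFn_smul c (mulInd μ E hE f)] with x h1 h2 h3 h4
  rw [h1, h4, Pi.smul_apply, h2]
  by_cases hx : x ∈ E
  · rw [Set.indicator_of_mem hx, Set.indicator_of_mem hx, h3]
    rfl
  · rw [Set.indicator_of_notMem hx, Set.indicator_of_notMem hx, smul_zero]

/-- Multiplication by the indicator of `E`, as a bounded operator on `L¹`. -/
noncomputable def mulIndL (μ : Measure α) (E : Set α) (hE : MeasurableSet E) :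
    Lp ℝ 1 μ →L[ℝ] Lp ℝ 1 μ :=
  LinearMap.mkContinuous
    { toFun := mulInd μ E hE
      map_add' := mulInd_add E hE
      map_smul' := mulInd_smul E hE } 1
    (fun f => by simpa using norm_mulInd_le E hE f)

theorem coeFn_mulIndL (E : Set α) (hE : MeasurableSet E) (f : Lp ℝ 1 μ) :
    mulIndL μ E hE f =ᵐ[μ] E.indicator ⇑f :=
  coeFn_mulInd E hE f

theorem norm_mulIndL_le (E : Set α) (hE : MeasurableSet E) :
    ‖mulIndL μ E hE‖ ≤ 1 :=
  LinearMap.mkContinuous_norm_le _ zero_le_one _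

theorem mulIndL_congr_set {E F : Set α} (h : E = F) (hE : MeasurableSet E)
    (hF : MeasurableSet F) (f : Lp ℝ 1 μ) :
    mulIndL μ E hE f = mulIndL μ F hF f := by subst h; rfl

theorem mulIndL_univ (f : Lp ℝ 1 μ) :
    mulIndL μ univ MeasurableSet.univ f = f := by
  apply Lp.ext
  filter_upwards [coeFn_mulIndL (μ := μ) univ MeasurableSet.univ f] with x h1
  rw [h1, Set.indicator_univ]

theorem mulIndL_union {s t : Set α} (hst : Disjoint s t) (hu : MeasurableSet (s ∪ t))
    (hs : MeasurableSet s) (ht : MeasurableSet t) (f : Lp ℝ 1 μ) :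
    mulIndL μ (s ∪ t) hu f = mulIndL μ s hs f + mulIndL μ t ht f := by
  apply Lp.ext
  filter_upwards [coeFn_mulIndL (s ∪ t) hu f, coeFn_mulIndL s hs f, coeFn_mulIndL t ht f,
    Lp.coeFn_add (mulIndL μ s hs f) (mulIndL μ t ht f)] with x h1 h2 h3 h4
  rw [h1, Set.indicator_union_of_disjoint hst, h4, Pi.add_apply, h2, h3]

theorem lintegral_nnnorm_ind_ne_top (s : Set α) (f : Lp ℝ 1 μ) :
    ∫⁻ x, (‖s.indicator (⇑f) x‖₊ : ℝ≥0∞) ∂μ ≠ ⊤ := by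
  simp only [← enorm_eq_nnnorm]
  rw [← eLpNorm_one_eq_lintegral_enorm]
  exact ((eLpNorm_indicator_le _).trans_lt (Lp.eLpNorm_lt_top f)).ne

theorem norm_mulIndL_add_of_disjoint {s t : Set α} (hst : Disjoint s t)
    (hs : MeasurableSet s) (ht : MeasurableSet t) (f : Lp ℝ 1 μ) :
    ‖mulIndL μ s hs f + mulIndL μ t ht f‖
      = ‖mulIndL μ s hs f‖ + ‖mulIndL μ t ht f‖ := by
  have hcoe : ⇑(mulIndL μ s hs f + mulIndL μ t ht f)
      =ᵐ[μ] fun x => s.indicator (⇑f) x + t.indicator (⇑f) x := by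
    filter_upwards [Lp.coeFn_add (mulIndL μ s hs f) (mulIndL μ t ht f),
      coeFn_mulIndL s hs f, coeFn_mulIndL t ht f] with x h1 h2 h3
    rw [h1, Pi.add_apply, h2, h3]
  rw [Lp.norm_def, Lp.norm_def, Lp.norm_def, eLpNorm_congr_ae hcoe,
    eLpNorm_congr_ae (coeFn_mulIndL s hs f), eLpNorm_congr_ae (coeFn_mulIndL t ht f),
    eLpNorm_one_eq_lintegral_enorm, eLpNorm_one_eq_lintegral_enorm,
    eLpNorm_one_eq_lintegral_enorm]
  simp only [enorm_eq_nnnorm]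
  have hpt : ∀ x, (‖s.indicator (⇑f) x + t.indicator (⇑f) x‖₊ : ℝ≥0∞)
      = (‖s.indicator (⇑f) x‖₊ : ℝ≥0∞) + ‖t.indicator (⇑f) x‖₊ := by
    intro x
    by_cases hxs : x ∈ s
    · have hxt : x ∉ t := fun h => Set.disjoint_left.mp hst hxs h
      simp [Set.indicator_of_mem hxs, Set.indicator_of_notMem hxt]
    · simp [Set.indicator_of_notMem hxs]
  rw [lintegral_congr hpt,
    lintegral_add_left' (f := fun x => (‖s.indicator (⇑f) x‖₊ : ℝ≥0∞))
      (((Lp.aestronglyMeasurable f).indicator hs).enorm) _,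
    ENNReal.toReal_add (lintegral_nnnorm_ind_ne_top s f) (lintegral_nnnorm_ind_ne_top t f)]

theorem mulIndL_mulIndL_eq_zero {D E : Set α} (hDE : Disjoint D E)
    (hD : MeasurableSet D) (hE : MeasurableSet E) (f : Lp ℝ 1 μ) :
    mulIndL μ D hD (mulIndL μ E hE f) = 0 := by
  apply Lp.ext
  filter_upwards [coeFn_mulIndL D hD (mulIndL μ E hE f), coeFn_mulIndL E hE f,
    Lp.coeFn_zero ℝ 1 μ] with x h1 h2 h3
  rw [h1, h3]
  by_cases hx : x ∈ D
  · have hx' : x ∉ E := fun h => Set.disjoint_left.mp hDE hx h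
    rw [Set.indicator_of_mem hx, h2, Set.indicator_of_notMem hx']
    rfl
  · rw [Set.indicator_of_notMem hx]; rfl

theorem mulIndL_indicatorConstLp {D : Set α} (hD : MeasurableSet D) (hμD : μ D ≠ ⊤) :
    mulIndL μ D hD (indicatorConstLp 1 hD hμD (1 : ℝ)) = indicatorConstLp 1 hD hμD (1 : ℝ) := by
  apply Lp.ext
  filter_upwards [coeFn_mulIndL D hD (indicatorConstLp 1 hD hμD (1 : ℝ)),
    indicatorConstLp_coeFn (p := 1) (hs := hD) (hμs := hμD) (c := (1 : ℝ))] with x h1 h2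
  rw [h1, h2]
  by_cases hx : x ∈ D
  · rw [Set.indicator_of_mem hx, h2]
  · rw [Set.indicator_of_notMem hx, Set.indicator_of_notMem hx]

end BCPfail
namespace BCPfailC
open MeasureTheory Set BCPfail

noncomputable abbrev μΩ : Measure (Set.Icc (0:ℝ) 1) := volume

/-- The part of `[0,1]` lying in the interval `(a, b]`. -/
def J (a b : ℝ) : Set (Set.Icc (0:ℝ) 1) := (fun x : (Set.Icc (0:ℝ) 1) => (x : ℝ)) ⁻¹' Set.Ioc a b

theorem measJ (a b : ℝ) : MeasurableSet (J a b) :=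
  measurable_subtype_coe measurableSet_Ioc

theorem volume_J_le (a b : ℝ) : μΩ (J a b) ≤ ENNReal.ofReal (b - a) := by
  rw [J, volume_preimage_coe measurableSet_Icc.nullMeasurableSet measurableSet_Ioc]
  calc volume (Set.Ioc a b ∩ Set.Icc 0 1) ≤ volume (Set.Ioc a b) :=
        measure_mono inter_subset_left
    _ = ENNReal.ofReal (b - a) := Real.volume_Ioc

theorem J_union {a b c : ℝ} (hac : a ≤ c) (hcb : c ≤ b) : J a b = J a c ∪ J c b := by
  rw [J, J, J, ← Set.preimage_union, Set.Ioc_union_Ioc_eq_Ioc hac hcb]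

theorem J_disjoint (a c b : ℝ) : Disjoint (J a c) (J c b) :=
  Disjoint.preimage _ (Set.Ioc_disjoint_Ioc_of_le le_rfl)

theorem J_base : J (-1) 1 = univ := by
  ext x
  simp only [J, Set.mem_preimage, Set.mem_Ioc, Set.mem_univ, iff_true]
  exact ⟨lt_of_lt_of_le (by norm_num) x.2.1, x.2.2⟩

/-- Bisection: a piece of `φ` supported on an interval of length `2/2^k` on which `T`
still beats the ratio `r`. -/
theorem exists_good_interval (T : Lp ℝ 1 μΩ →L[ℝ] Lp ℝ 1 μΩ) {r : ℝ}
    (φ : Lp ℝ 1 μΩ) (h : r * ‖φ‖ < ‖T φ‖) (k : ℕ) :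
    ∃ a b : ℝ, b - a = 2 / 2 ^ k ∧
      r * ‖mulIndL μΩ (J a b) (measJ a b) φ‖ < ‖T (mulIndL μΩ (J a b) (measJ a b) φ)‖ := by
  induction k with
  | zero =>
    refine ⟨-1, 1, by norm_num, ?_⟩
    rw [mulIndL_congr_set J_base (measJ (-1) 1) MeasurableSet.univ φ, mulIndL_univ]
    exact h
  | succ k ih =>
    obtain ⟨a, b, hlen, hgood⟩ := ih
    have hpos : (0:ℝ) < 2 / 2 ^ k := by positivity
    set c := (a + b) / 2 with hc
    have hac : a ≤ c := by rw [hc]; linarith [hlen]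
    have hcb : c ≤ b := by rw [hc]; linarith [hlen]
    have h2 : (2:ℝ) / 2 ^ k / 2 = 2 / 2 ^ (k + 1) := by rw [pow_succ]; ring
    have hlen' : c - a = 2 / 2 ^ (k + 1) ∧ b - c = 2 / 2 ^ (k + 1) := by
      constructor
      · have hca : c - a = (b - a) / 2 := by rw [hc]; ring
        rw [hca, hlen, h2]
      · have hbc : b - c = (b - a) / 2 := by rw [hc]; ring
        rw [hbc, hlen, h2]
    have hsplit := mulIndL_congr_set (J_union hac hcb) (measJ a b)
      ((measJ a c).union (measJ c b)) φ
    have hU := mulIndL_union (μ := μΩ) (J_disjoint a c b)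
      ((measJ a c).union (measJ c b)) (measJ a c) (measJ c b) φ
    set x := mulIndL μΩ (J a c) (measJ a c) φ with hx
    set y := mulIndL μΩ (J c b) (measJ c b) φ with hy
    rw [hsplit, hU] at hgood
    have hnorm : ‖x + y‖ = ‖x‖ + ‖y‖ :=
      norm_mulIndL_add_of_disjoint (J_disjoint a c b) (measJ a c) (measJ c b) φ
    have hTxy : ‖T (x + y)‖ ≤ ‖T x‖ + ‖T y‖ := by
      rw [map_add]; exact norm_add_le _ _
    rcases lt_or_ge (r * ‖x‖) (‖T x‖) with h1 | h1
    · exact ⟨a, c, hlen'.1, h1⟩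
    · refine ⟨c, b, hlen'.2, ?_⟩
      rw [hnorm] at hgood
      linarith
end BCPfailC

section Main
open MeasureTheory Set BCPfail BCPfailC

theorem geom_bound : ∑' n : ℕ, ((2:ℝ≥0∞)⁻¹) ^ (n + 2) ≤ 2⁻¹ := by
  have h2 : ((2:ℝ≥0∞)⁻¹) ^ 2 = 2⁻¹ * 2⁻¹ := sq 2⁻¹
  refine le_of_eq ?_
  calc ∑' n : ℕ, ((2:ℝ≥0∞)⁻¹) ^ (n + 2)
      = ∑' n : ℕ, ((2:ℝ≥0∞)⁻¹) ^ n * ((2:ℝ≥0∞)⁻¹) ^ 2 := by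
        refine tsum_congr fun n => ?_
        rw [pow_add]
    _ = (∑' n : ℕ, ((2:ℝ≥0∞)⁻¹) ^ n) * ((2:ℝ≥0∞)⁻¹) ^ 2 := ENNReal.tsum_mul_right
    _ = (1 - 2⁻¹)⁻¹ * ((2:ℝ≥0∞)⁻¹) ^ 2 := by rw [ENNReal.tsum_geometric]
    _ = 2 * (2⁻¹ * 2⁻¹) := by rw [ENNReal.one_sub_inv_two, inv_inv, h2]
    _ = (2 * 2⁻¹) * 2⁻¹ := by rw [mul_assoc]
    _ = 2⁻¹ := by rw [ENNReal.mul_inv_cancel two_ne_zero ENNReal.ofNat_ne_top, one_mul]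

theorem len_bound (n : ℕ) : ENNReal.ofReal (2 / 2 ^ (n + 3) : ℝ) ≤ ((2:ℝ≥0∞)⁻¹) ^ (n + 2) := by
  have heq : (2 / 2 ^ (n + 3) : ℝ) = (2⁻¹ : ℝ) ^ (n + 2) := by
    rw [pow_succ]
    field_simp
    ring
    rw [← mul_pow]; norm_num
  rw [heq, ENNReal.ofReal_pow (by norm_num)]
  have h12 : ENNReal.ofReal (2⁻¹ : ℝ) = (2:ℝ≥0∞)⁻¹ := by
    rw [ENNReal.ofReal_inv_of_pos (by norm_num)]
    norm_num
  rw [h12]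

open MeasureTheory in
theorem bcp_fails_for_operators_on_L1_aux :
    ¬ HasBCP ((Lp ℝ 1 (volume : Measure (Set.Icc (0:ℝ) 1))) →L[ℝ]
        (Lp ℝ 1 (volume : Measure (Set.Icc (0:ℝ) 1)))) := by
  rintro ⟨c, r, hr, hcov⟩
  -- for each `n`, a vector where `c n` beats ratio `r n`
  have key : ∀ n : ℕ, ∃ φ : Lp ℝ 1 μΩ, r n * ‖φ‖ < ‖c n φ‖ := by
    intro n
    by_contra hcon
    push_neg at hcon
    have : ‖c n‖ ≤ r n := ContinuousLinearMap.opNorm_le_bound _ (hr n).1.le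
      (fun φ => by simpa [mul_comm] using hcon φ)
    exact absurd this (not_le.mpr (hr n).2)
  choose φ hφ using key
  have pick : ∀ n : ℕ, ∃ a b : ℝ, b - a = 2 / 2 ^ (n + 3) ∧
      r n * ‖mulIndL μΩ (J a b) (measJ a b) (φ n)‖
        < ‖c n (mulIndL μΩ (J a b) (measJ a b) (φ n))‖ :=
    fun n => exists_good_interval (c n) (φ n) (hφ n) (n + 3)
  choose a b hlen hgood using pick
  -- the small exceptional sets and the surviving set `D`
  have hEmeas : ∀ n, MeasurableSet (J (a n) (b n)) := fun n => measJ _ _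
  have hDmeas : MeasurableSet ((⋃ n, J (a n) (b n))ᶜ) :=
    (MeasurableSet.iUnion hEmeas).compl
  set D : Set (Set.Icc (0:ℝ) 1) := (⋃ n, J (a n) (b n))ᶜ with hD
  have hUvol : μΩ (⋃ n, J (a n) (b n)) ≤ 2⁻¹ := by
    refine (measure_iUnion_le _).trans ?_
    refine le_trans (ENNReal.tsum_le_tsum fun n => ?_) geom_bound
    refine (volume_J_le (a n) (b n)).trans ?_
    rw [hlen n]
    exact len_bound n
  have hDvol : μΩ D ≠ 0 := by
    intro h0
    have huniv : μΩ univ = 1 := measure_univ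
    have hcover : (univ : Set (Set.Icc (0:ℝ) 1)) = D ∪ ⋃ n, J (a n) (b n) := by
      rw [hD, compl_union_self]
    have : (1 : ℝ≥0∞) ≤ 2⁻¹ := by
      calc (1:ℝ≥0∞) = μΩ univ := huniv.symm
        _ = μΩ (D ∪ ⋃ n, J (a n) (b n)) := by rw [← hcover]
        _ ≤ μΩ D + μΩ (⋃ n, J (a n) (b n)) := measure_union_le _ _
        _ = μΩ (⋃ n, J (a n) (b n)) := by rw [h0, zero_add]
        _ ≤ 2⁻¹ := hUvol
    exact absurd this (not_le.mpr (by simp [ENNReal.inv_lt_one]))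
  have hDtop : μΩ D ≠ ⊤ := measure_ne_top _ _
  -- the sphere element: multiplication by the indicator of `D`
  set S : Lp ℝ 1 μΩ →L[ℝ] Lp ℝ 1 μΩ := mulIndL μΩ D hDmeas with hS
  have hSnorm : ‖S‖ = 1 := by
    refine le_antisymm (norm_mulIndL_le D hDmeas) ?_
    set f₀ : Lp ℝ 1 μΩ := indicatorConstLp 1 hDmeas hDtop (1:ℝ) with hf₀
    have hput : S f₀ = f₀ := mulIndL_indicatorConstLp hDmeas hDtop
    have hnormf₀ : ‖f₀‖ = (μΩ D).toReal := by
      rw [hf₀, norm_indicatorConstLp one_ne_zero ENNReal.one_ne_top]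
      simp
      rfl
    have hposf₀ : 0 < ‖f₀‖ := by
      rw [hnormf₀]
      exact ENNReal.toReal_pos hDvol hDtop
    have := (S).le_opNorm f₀
    rw [hput] at this
    have h1 : 1 * ‖f₀‖ ≤ ‖S‖ * ‖f₀‖ := by rw [one_mul]; exact this
    exact le_of_mul_le_mul_right h1 hposf₀
  have hSsphere : S ∈ sphere (0 : Lp ℝ 1 μΩ →L[ℝ] Lp ℝ 1 μΩ) 1 :=
    mem_sphere_zero_iff_norm.mpr hSnorm
  obtain ⟨U, ⟨n, rfl⟩, hnU⟩ := hcov hSsphere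
  have hball : ‖S - c n‖ ≤ r n := by
    rw [← dist_eq_norm]
    exact mem_closedBall.mp hnU
  -- the witness
  set ψ : Lp ℝ 1 μΩ := mulIndL μΩ (J (a n) (b n)) (measJ (a n) (b n)) (φ n) with hψ
  have hdisj : Disjoint D (J (a n) (b n)) :=
    disjoint_compl_left.mono_right (subset_iUnion (fun m => J (a m) (b m)) n)
  have hSψ : S ψ = 0 := mulIndL_mulIndL_eq_zero hdisj hDmeas (measJ _ _) (φ n)
  have hcontr : ‖c n ψ‖ ≤ r n * ‖ψ‖ := by
    calc ‖c n ψ‖ = ‖c n ψ - S ψ‖ := by rw [hSψ, sub_zero]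
      _ = ‖(c n - S) ψ‖ := by rw [ContinuousLinearMap.sub_apply]
      _ ≤ ‖c n - S‖ * ‖ψ‖ := (c n - S).le_opNorm ψ
      _ ≤ r n * ‖ψ‖ := by
          refine mul_le_mul_of_nonneg_right ?_ (norm_nonneg ψ)
          rw [norm_sub_rev]
          exact hball
  exact absurd hcontr (not_le.mpr (hgood n))

end Main

open MeasureTheory in
theorem bcp_fails_for_operators_on_L1 :
    ¬ HasBCP ((Lp ℝ 1 (volume : Measure (Set.Icc (0:ℝ) 1))) →L[ℝ]
        (Lp ℝ 1 (volume : Measure (Set.Icc (0:ℝ) 1)))) := by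
  exact bcp_fails_for_operators_on_L1_aux
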